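/- For any linkage L and any (C,A) ∈ IGConf₀(L), the annotation A is well-annotated: for distinct edges e_i and e_j, if the segments C(e_i) and C(e_j) overlap over a segment of length l > 0 then A_{ij} = l or A_{ij} = −l, and if they do not overlap over a segment of positive length then A_{ij} = Ord(C(e_i), C(e_j)). -/

import Mathlib

open MeasureTheory Filter Topology Set

noncomputable section
open scoped Classical

abbrev Pt : Type := EuclideanSpace ℝ (Fin 2)

/-- The point with coordinates `(a, b)` in the plane. -/
def pt (a b : ℝ) : Pt := WithLp.toLp 2 ![a, b]

/-- `d₊(e₁,e₂)` where `e₁` is the oriented segment from `p` to `q` and `e₂` the segment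
from `r` to `s`: the Lebesgue measure of the set of `x ∈ [0, ‖q-p‖]` such that some point
of `e₂` has coordinates `(x, y)` with `y ≥ 0` in the frame centered at `p` with the
`x`-axis directed along `e₁`. It is `0` if `e₁` is degenerate. -/
def dplus (p q r s : Pt) : ℝ :=
  if p = q then 0 else
    (volume {x : ℝ | x ∈ Set.Icc (0 : ℝ) (dist p q) ∧
        ∃ y : ℝ, 0 ≤ y ∧
          p + x • (‖q - p‖⁻¹ • (q - p)) +
              y • pt (-(‖q - p‖⁻¹ • (q - p)) 1) ((‖q - p‖⁻¹ • (q - p)) 0)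
            ∈ segment ℝ r s}).toReal

/-- As `dplus`, but for points below the axis (`y ≤ 0`). -/
def dminus (p q r s : Pt) : ℝ :=
  if p = q then 0 else
    (volume {x : ℝ | x ∈ Set.Icc (0 : ℝ) (dist p q) ∧
        ∃ y : ℝ, y ≤ 0 ∧
          p + x • (‖q - p‖⁻¹ • (q - p)) +
              y • pt (-(‖q - p‖⁻¹ • (q - p)) 1) ((‖q - p‖⁻¹ • (q - p)) 0)
            ∈ segment ℝ r s}).toReal

/-- The order function `Ord(e₁,e₂) = d₊(e₁,e₂) − d₋(e₁,e₂)`. -/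
def ordFn (p q r s : Pt) : ℝ := dplus p q r s - dminus p q r s

/-- A linkage: a finite graph given by an edge-index type `E` with endpoint maps
`fst, snd : E → V` (this also fixes an orientation of each edge), together with a
nonnegative length for each edge (bar). -/
structure Linkage (V E : Type) where
  fst : E → V
  snd : E → V
  len : E → ℝ
  len_nonneg : ∀ e, 0 ≤ len e

variable {V E : Type}

/-- The set `Conf₀(L)` of configurations of a linkage: maps `C : V → ℝ²` realizing
every edge length exactly. -/
def ConfSet (L : Linkage V E) : Set (V → Pt) :=
  {C | ∀ e : E, dist (C (L.fst e)) (C (L.snd e)) = L.len e}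

/-- Configurations of linkages `ε`-related to `L`: each bar length is realized within
`ε` of its length in `L`. -/
def ConfRel (L : Linkage V E) (ε : ℝ) : Set (V → Pt) :=
  {C | ∀ e : E, |dist (C (L.fst e)) (C (L.snd e)) - L.len e| ≤ ε}

/-- The closed segment (bar) assigned to edge `e` by the configuration `C`. -/
def Seg (L : Linkage V E) (C : V → Pt) (e : E) : Set Pt :=
  segment ℝ (C (L.fst e)) (C (L.snd e))

/-- Two vertices are joined by a path of zero-length bars (bars whose endpoints coincide
under the configuration `C`). -/
def ZeroJoined (L : Linkage V E) (C : V → Pt) : V → V → Prop :=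
  Relation.ReflTransGen fun u v =>
    (∃ e : E, (L.fst e = u ∧ L.snd e = v) ∨ (L.fst e = v ∧ L.snd e = u)) ∧ C u = C v

/-- A configuration is nontouching if no two bars intersect except at shared endpoints,
and two vertices are mapped to the same point if and only if they are joined by a path of
zero-length bars. -/
def Nontouching (L : Linkage V E) (C : V → Pt) : Prop :=
  (∀ u v : V, C u = C v ↔ ZeroJoined L C u v) ∧
  (∀ e f : E, e ≠ f → ∀ z ∈ Seg L C e ∩ Seg L C f,
    (∃ u : V, (L.fst e = u ∨ L.snd e = u) ∧ C u = z) ∧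
    (∃ v : V, (L.fst f = v ∨ L.snd f = v) ∧ C v = z))

/-- `NConf_ε(L)`: the nontouching configurations of linkages `ε`-related to `L`. -/
def NConf (L : Linkage V E) (ε : ℝ) : Set (V → Pt) :=
  {C | C ∈ ConfRel L ε ∧ Nontouching L C}

/-- The annotation function `Annot_L`, sending a map `C : V → ℝ²` to the pair `(C, A)`
where `A i j = Ord(C(eᵢ), C(eⱼ))`. -/
def Annot (L : Linkage V E) (C : V → Pt) : (V → Pt) × (E → E → ℝ) :=
  (C, fun i j => ordFn (C (L.fst i)) (C (L.snd i)) (C (L.fst j)) (C (L.snd j)))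

/-- The space `IGConf₀(L)` of noncrossing configurations of `L`:
`(Conf₀(L) × ℝ^{E×E}) ∩ closure (Annot_L(NConf₁(L)))`. -/
def IGConf (L : Linkage V E) : Set ((V → Pt) × (E → E → ℝ)) :=
  (ConfSet L ×ˢ (Set.univ : Set (E → E → ℝ))) ∩ closure (Annot L '' NConf L 1)

/-- Two subsets of the plane overlap over a segment of length `d` if their intersection is
a segment of length `d`. -/
def OverlapLen (s t : Set Pt) (d : ℝ) : Prop :=
  ∃ u v : Pt, s ∩ t = segment ℝ u v ∧ dist u v = d


section AuxFrame

variable {p q : Pt} (hpq : p ≠ q)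

/-- frame direction -/
def fr (p q : Pt) : Pt := ‖q - p‖⁻¹ • (q - p)
def frw (p q : Pt) : Pt := pt (-(fr p q 1)) (fr p q 0)
def fX (p q z : Pt) : ℝ := inner ℝ (fr p q) (z - p)
def fY (p q z : Pt) : ℝ := inner ℝ (frw p q) (z - p)

lemma inner_eq (x y : Pt) : (inner ℝ x y : ℝ) = x 0 * y 0 + x 1 * y 1 := by
  simp [PiLp.inner_apply, Fin.sum_univ_two]
  ring

variable {p q : Pt} (hpq : p ≠ q)

lemma norm_fr (hpq : p ≠ q) : ‖fr p q‖ = 1 := by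
  rw [fr, norm_smul, norm_inv, norm_norm]
  have : ‖q - p‖ ≠ 0 := by
    simpa [sub_eq_zero] using fun h => hpq h.symm
  field_simp
lemma fr_sq (hpq : p ≠ q) : fr p q 0 ^ 2 + fr p q 1 ^ 2 = 1 := by
  have h := real_inner_self_eq_norm_sq (fr p q)
  rw [norm_fr hpq] at h
  rw [inner_eq] at h
  nlinarith [h]

lemma span_eq (hpq : p ≠ q) (z : Pt) :
    p + (fX p q z) • fr p q + (fY p q z) • frw p q = z := by
  have h := fr_sq hpq
  set a := fr p q 0
  set b := fr p q 1
  have hw0 : frw p q 0 = -b := rfl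
  have hw1 : frw p q 1 = a := rfl
  ext i
  fin_cases i
  · show p 0 + (fX p q z) * fr p q 0 + (fY p q z) * frw p q 0 = z 0
    rw [fX, fY, inner_eq, inner_eq, hw0, hw1]
    show p 0 + (a * (z 0 - p 0) + b * (z 1 - p 1)) * a
        + (-b * (z 0 - p 0) + a * (z 1 - p 1)) * (-b) = z 0
    linear_combination (z 0 - p 0) * h
  · show p 1 + (fX p q z) * fr p q 1 + (fY p q z) * frw p q 1 = z 1
    rw [fX, fY, inner_eq, inner_eq, hw0, hw1]
    show p 1 + (a * (z 0 - p 0) + b * (z 1 - p 1)) * b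
        + (-b * (z 0 - p 0) + a * (z 1 - p 1)) * a = z 1
    linear_combination (z 1 - p 1) * h

lemma fX_point (hpq : p ≠ q) (x y : ℝ) :
    fX p q (p + x • fr p q + y • frw p q) = x := by
  have h := fr_sq hpq
  set a := fr p q 0; set b := fr p q 1
  rw [fX, inner_eq]
  show a * (p 0 + x * a + y * (-b) - p 0) + b * (p 1 + x * b + y * a - p 1) = x
  linear_combination x * h

lemma fY_point (hpq : p ≠ q) (x y : ℝ) :
    fY p q (p + x • fr p q + y • frw p q) = y := by
  have h := fr_sq hpq
  set a := fr p q 0; set b := fr p q 1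
  rw [fY, inner_eq]
  show -b * (p 0 + x * a + y * (-b) - p 0) + a * (p 1 + x * b + y * a - p 1) = y
  linear_combination y * h

lemma q_eq (hpq : p ≠ q) : q = p + dist p q • fr p q := by
  have h : ‖q - p‖ ≠ 0 := by simpa [sub_eq_zero] using fun h => hpq h.symm
  rw [dist_eq_norm', fr, smul_smul]
  field_simp
  simp

lemma fX_comb (a b : ℝ) (hab : a + b = 1) (z w : Pt) :
    fX p q (a • z + b • w) = a * fX p q z + b * fX p q w := by
  have : a • z + b • w - p = a • (z - p) + b • (w - p) := by
    have h1 : a • (z - p) + b • (w - p) = a • z + b • w - (a+b) • p := by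
      rw [smul_sub, smul_sub, add_smul]; abel
    rw [h1, hab, one_smul]
  rw [fX, this, inner_add_right, real_inner_smul_right, real_inner_smul_right]; rfl

lemma fY_comb (a b : ℝ) (hab : a + b = 1) (z w : Pt) :
    fY p q (a • z + b • w) = a * fY p q z + b * fY p q w := by
  have : a • z + b • w - p = a • (z - p) + b • (w - p) := by
    have h1 : a • (z - p) + b • (w - p) = a • z + b • w - (a+b) • p := by
      rw [smul_sub, smul_sub, add_smul]; abel
    rw [h1, hab, one_smul]
  rw [fY, this, inner_add_right, real_inner_smul_right, real_inner_smul_right]; rfl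

lemma fX_self : fX p q p = 0 := by simp [fX]
lemma fX_q (hpq : p ≠ q) : fX p q q = dist p q := by
  have h := fX_point hpq (dist p q) 0
  rw [zero_smul, add_zero, ← q_eq hpq] at h
  exact h
lemma fY_self : fY p q p = 0 := by simp [fY]
lemma fY_q (hpq : p ≠ q) : fY p q q = 0 := by
  have h := fY_point hpq (dist p q) 0
  rw [zero_smul, add_zero, ← q_eq hpq] at h
  exact h

lemma mem_segment_iff' {z r s : Pt} :
    z ∈ segment ℝ r s ↔ ∃ a b : ℝ, 0 ≤ a ∧ 0 ≤ b ∧ a + b = 1 ∧ a • r + b • s = z :=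
  Iff.rfl

lemma mem_seg_frame_iff (hpq : p ≠ q) {z : Pt} :
    z ∈ segment ℝ p q ↔ fY p q z = 0 ∧ fX p q z ∈ Icc 0 (dist p q) := by
  have hl : (0:ℝ) < dist p q := dist_pos.mpr hpq
  constructor
  · rintro ⟨a, b, ha, hb, hab, rfl⟩
    have hb1 : b ≤ 1 := by linarith
    constructor
    · rw [fY_comb a b hab, fY_self, fY_q hpq]; ring
    · rw [fX_comb a b hab, fX_self, fX_q hpq]
      constructor
      · positivity
      · nlinarith
  · rintro ⟨hY, hX⟩
    refine ⟨1 - fX p q z / dist p q, fX p q z / dist p q, ?_, ?_, by ring, ?_⟩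
    · have := hX.2
      rw [sub_nonneg]
      exact div_le_one_of_le₀ this hl.le
    · exact div_nonneg hX.1 hl.le
    · have hspan := span_eq hpq z
      rw [hY, zero_smul, add_zero] at hspan
      have key : ∀ b : ℝ, (1 - b) • p + b • q = p + (b * dist p q) • fr p q := by
        intro b
        calc (1 - b) • p + b • q = (1 - b) • p + b • (p + dist p q • fr p q) := by
              rw [← q_eq hpq]
          _ = p + (b * dist p q) • fr p q := by
              rw [smul_add, smul_smul, ← add_assoc, ← add_smul, sub_add_cancel, one_smul]
      rw [key, div_mul_cancel₀ _ hl.ne']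
      exact hspan

lemma fX_image_iff (hpq : p ≠ q) {r s : Pt} {x : ℝ} :
    (∃ z ∈ segment ℝ r s, fX p q z = x) ↔ x ∈ uIcc (fX p q r) (fX p q s) := by
  rw [← segment_eq_uIcc]
  constructor
  · rintro ⟨z, ⟨a, b, ha, hb, hab, rfl⟩, rfl⟩
    exact ⟨a, b, ha, hb, hab, (fX_comb a b hab r s).symm⟩
  · rintro ⟨a, b, ha, hb, hab, rfl⟩
    exact ⟨a • r + b • s, ⟨a, b, ha, hb, hab, rfl⟩, fX_comb a b hab r s⟩

lemma two_roots {r s z₁ z₂ : Pt} (h₁ : z₁ ∈ segment ℝ r s) (h₂ : z₂ ∈ segment ℝ r s)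
    (hne : z₁ ≠ z₂) (hY₁ : fY p q z₁ = 0) (hY₂ : fY p q z₂ = 0) :
    fY p q r = 0 ∧ fY p q s = 0 := by
  obtain ⟨a₁, b₁, ha₁, hb₁, hab₁, hz₁⟩ := h₁
  obtain ⟨a₂, b₂, ha₂, hb₂, hab₂, hz₂⟩ := h₂
  rw [← hz₁, fY_comb a₁ b₁ hab₁] at hY₁
  rw [← hz₂, fY_comb a₂ b₂ hab₂] at hY₂
  have hane : a₁ ≠ a₂ := by
    rintro rfl
    have hb : b₁ = b₂ := by linarith
    have : z₁ = z₂ := by rw [← hz₁, ← hz₂, hb]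
    exact hne this
  have hYr : fY p q r = fY p q s := by
    have hb₁' : b₁ = 1 - a₁ := by linarith
    have hb₂' : b₂ = 1 - a₂ := by linarith
    rw [hb₁'] at hY₁; rw [hb₂'] at hY₂
    have : (a₁ - a₂) * (fY p q r - fY p q s) = 0 := by linarith [hY₁, hY₂]
    rcases mul_eq_zero.mp this with h | h
    · exact absurd (by linarith : a₁ = a₂) hane
    · linarith
  constructor <;> nlinarith [hY₁, hYr]

lemma ivt_zero {r s z₁ z₂ : Pt} (h₁ : z₁ ∈ segment ℝ r s) (h₂ : z₂ ∈ segment ℝ r s)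
    {l : ℝ} (hY₁ : 0 < fY p q z₁) (hY₂ : fY p q z₂ < 0)
    (hX₁ : fX p q z₁ ∈ Ioo 0 l) (hX₂ : fX p q z₂ ∈ Ioo 0 l) :
    ∃ z₀ ∈ segment ℝ r s, fY p q z₀ = 0 ∧ fX p q z₀ ∈ Ioo 0 l := by
  set y₁ := fY p q z₁; set y₂ := fY p q z₂
  set t := y₁ / (y₁ - y₂) with ht
  have hden : 0 < y₁ - y₂ := by linarith
  have ht0 : 0 < t := div_pos hY₁ hden
  have ht1 : t < 1 := by rw [ht, div_lt_one hden]; linarith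
  refine ⟨(1 - t) • z₁ + t • z₂, ?_, ?_, ?_⟩
  · exact (convex_segment r s) h₁ h₂ (by linarith) (le_of_lt ht0) (by ring)
  · rw [fY_comb (1 - t) t (by ring)]
    show (1 - t) * y₁ + t * y₂ = 0
    rw [ht]; field_simp; ring
  · rw [fX_comb (1 - t) t (by ring)]
    constructor
    · nlinarith [hX₁.1, hX₂.1]
    · nlinarith [hX₁.2, hX₂.2]

def msf (a b l : ℝ) : ℝ := max (min l (max a b) - max 0 (min a b)) 0

lemma toReal_ofReal_max (x : ℝ) : (ENNReal.ofReal x).toReal = max x 0 := by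
  rcases le_total x 0 with h | h
  · simp [ENNReal.ofReal_eq_zero.mpr h, max_eq_right h]
  · simp [ENNReal.toReal_ofReal h, max_eq_left h]

def dplus' (p q r s : Pt) : ℝ :=
  (volume {x : ℝ | x ∈ Icc 0 (dist p q) ∧
    ∃ z ∈ segment ℝ r s, 0 ≤ fY p q z ∧ fX p q z = x}).toReal

def dminus' (p q r s : Pt) : ℝ :=
  (volume {x : ℝ | x ∈ Icc 0 (dist p q) ∧
    ∃ z ∈ segment ℝ r s, fY p q z ≤ 0 ∧ fX p q z = x}).toReal

lemma dplus_eq (r s : Pt) (hpq : p ≠ q) : dplus p q r s = dplus' p q r s := by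
  rw [dplus, if_neg hpq, dplus']
  congr 1
  congr 1
  ext x
  have e1 : ‖q - p‖⁻¹ • (q - p) = fr p q := rfl
  have e2 : pt (-(‖q - p‖⁻¹ • (q - p)) 1) ((‖q - p‖⁻¹ • (q - p)) 0) = frw p q := rfl
  have e3 : pt (-(fr p q 1)) (fr p q 0) = frw p q := rfl
  simp only [mem_setOf_eq, e1, e2, e3]
  constructor
  · rintro ⟨hx, y, hy, hz⟩
    exact ⟨hx, _, hz, by rw [fY_point hpq]; exact hy, by rw [fX_point hpq]⟩
  · rintro ⟨hx, z, hz, hY, hXx⟩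
    refine ⟨hx, fY p q z, hY, ?_⟩
    show p + x • fr p q + fY p q z • frw p q ∈ segment ℝ r s
    rw [← hXx, span_eq hpq]
    exact hz

lemma dminus_eq (r s : Pt) (hpq : p ≠ q) : dminus p q r s = dminus' p q r s := by
  rw [dminus, if_neg hpq, dminus']
  congr 1
  congr 1
  ext x
  have e1 : ‖q - p‖⁻¹ • (q - p) = fr p q := rfl
  have e2 : pt (-(‖q - p‖⁻¹ • (q - p)) 1) ((‖q - p‖⁻¹ • (q - p)) 0) = frw p q := rfl
  have e3 : pt (-(fr p q 1)) (fr p q 0) = frw p q := rfl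
  simp only [mem_setOf_eq, e1, e2, e3]
  constructor
  · rintro ⟨hx, y, hy, hz⟩
    exact ⟨hx, _, hz, by rw [fY_point hpq]; exact hy, by rw [fX_point hpq]⟩
  · rintro ⟨hx, z, hz, hY, hXx⟩
    refine ⟨hx, fY p q z, hY, ?_⟩
    show p + x • fr p q + fY p q z • frw p q ∈ segment ℝ r s
    rw [← hXx, span_eq hpq]
    exact hz

lemma volume_S_lemma (r s : Pt) (hpq : p ≠ q) :
    (volume {x : ℝ | x ∈ Icc 0 (dist p q) ∧ ∃ z ∈ segment ℝ r s, fX p q z = x}).toReal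
      = msf (fX p q r) (fX p q s) (dist p q) := by
  have hSeq : {x : ℝ | x ∈ Icc 0 (dist p q) ∧ ∃ z ∈ segment ℝ r s, fX p q z = x}
      = Icc (max 0 (min (fX p q r) (fX p q s))) (min (dist p q) (max (fX p q r) (fX p q s))) := by
    ext x
    simp only [mem_setOf_eq, fX_image_iff hpq]
    rw [show uIcc (fX p q r) (fX p q s) = Icc (min (fX p q r) (fX p q s)) (max (fX p q r) (fX p q s)) from rfl]
    simp only [mem_Icc]
    constructor
    · rintro ⟨⟨a1, a2⟩, b1, b2⟩
      exact ⟨max_le a1 b1, le_min a2 b2⟩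
    · rintro ⟨c1, c2⟩
      exact ⟨⟨le_trans (le_max_left _ _) c1, le_trans c2 (min_le_left _ _)⟩,
        le_trans (le_max_right _ _) c1, le_trans c2 (min_le_right _ _)⟩
  rw [hSeq, Real.volume_Icc, toReal_ofReal_max, msf]

lemma measure_null_of_sub (r s : Pt) (hpq : p ≠ q)
    (Hsub : {z | z ∈ segment ℝ r s ∧ fY p q z = 0 ∧ fX p q z ∈ Ioo 0 (dist p q)}.Subsingleton)
    (hneg : ¬ ∃ z ∈ segment ℝ r s, fX p q z ∈ Ioo 0 (dist p q) ∧ fY p q z < 0) :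
    volume {x : ℝ | x ∈ Icc 0 (dist p q) ∧ ∃ z ∈ segment ℝ r s, fY p q z ≤ 0 ∧ fX p q z = x} = 0 := by
  set Z := {z | z ∈ segment ℝ r s ∧ fY p q z = 0 ∧ fX p q z ∈ Ioo 0 (dist p q)}
  apply measure_mono_null
    (t := ({0, dist p q} : Set ℝ) ∪ (fX p q '' Z))
  · rintro x ⟨hx, z, hz, hY, hXx⟩
    by_cases hIoo : x ∈ Ioo 0 (dist p q)
    · rcases lt_or_eq_of_le hY with hlt | heq
      · exact absurd ⟨z, hz, by rw [hXx]; exact hIoo, hlt⟩ hneg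
      · exact Or.inr ⟨z, ⟨hz, heq, by rw [hXx]; exact hIoo⟩, hXx⟩
    · left
      rcases lt_or_eq_of_le hx.1 with h0 | h0
      · right
        rcases lt_or_eq_of_le hx.2 with h1 | h1
        · exact absurd ⟨h0, h1⟩ hIoo
        · exact h1
      · exact Or.inl h0.symm
  · apply Set.Finite.measure_zero
    exact (Set.toFinite _).union (Hsub.image (fX p q)).finite

lemma measure_null_of_sub' (r s : Pt) (hpq : p ≠ q)
    (Hsub : {z | z ∈ segment ℝ r s ∧ fY p q z = 0 ∧ fX p q z ∈ Ioo 0 (dist p q)}.Subsingleton)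
    (hpos : ¬ ∃ z ∈ segment ℝ r s, fX p q z ∈ Ioo 0 (dist p q) ∧ 0 < fY p q z) :
    volume {x : ℝ | x ∈ Icc 0 (dist p q) ∧ ∃ z ∈ segment ℝ r s, 0 ≤ fY p q z ∧ fX p q z = x} = 0 := by
  set Z := {z | z ∈ segment ℝ r s ∧ fY p q z = 0 ∧ fX p q z ∈ Ioo 0 (dist p q)}
  apply measure_mono_null
    (t := ({0, dist p q} : Set ℝ) ∪ (fX p q '' Z))
  · rintro x ⟨hx, z, hz, hY, hXx⟩
    by_cases hIoo : x ∈ Ioo 0 (dist p q)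
    · rcases lt_or_eq_of_le hY with hlt | heq
      · exact absurd ⟨z, hz, by rw [hXx]; exact hIoo, hlt⟩ hpos
      · exact Or.inr ⟨z, ⟨hz, heq.symm, by rw [hXx]; exact hIoo⟩, hXx⟩
    · left
      rcases lt_or_eq_of_le hx.1 with h0 | h0
      · right
        rcases lt_or_eq_of_le hx.2 with h1 | h1
        · exact absurd ⟨h0, h1⟩ hIoo
        · exact h1
      · exact Or.inl h0.symm
  · apply Set.Finite.measure_zero
    exact (Set.toFinite _).union (Hsub.image (fX p q)).finite

lemma volume_ne_top (r s : Pt) (T : Set ℝ) (hT : T ⊆ Icc 0 (dist p q)) : volume T ≠ ⊤ := by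
  apply ne_top_of_le_ne_top _ (measure_mono hT)
  rw [Real.volume_Icc]
  exact ENNReal.ofReal_ne_top

lemma ord_eq_msf (r s : Pt) (hpq : p ≠ q)
    (Hsub : {z | z ∈ segment ℝ r s ∧ fY p q z = 0 ∧ fX p q z ∈ Ioo 0 (dist p q)}.Subsingleton)
    (hneg : ¬ ∃ z ∈ segment ℝ r s, fX p q z ∈ Ioo 0 (dist p q) ∧ fY p q z < 0) :
    ordFn p q r s = msf (fX p q r) (fX p q s) (dist p q) := by
  set Sp := {x : ℝ | x ∈ Icc 0 (dist p q) ∧ ∃ z ∈ segment ℝ r s, 0 ≤ fY p q z ∧ fX p q z = x}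
  set Sm := {x : ℝ | x ∈ Icc 0 (dist p q) ∧ ∃ z ∈ segment ℝ r s, fY p q z ≤ 0 ∧ fX p q z = x}
  set S := {x : ℝ | x ∈ Icc 0 (dist p q) ∧ ∃ z ∈ segment ℝ r s, fX p q z = x}
  have hm0 : volume Sm = 0 := measure_null_of_sub r s hpq Hsub hneg
  have hsub1 : Sp ⊆ S := by rintro x ⟨hx, z, hz, _, hXx⟩; exact ⟨hx, z, hz, hXx⟩
  have hsub2 : S ⊆ Sp ∪ Sm := by
    rintro x ⟨hx, z, hz, hXx⟩
    rcases le_total 0 (fY p q z) with h | h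
    · exact Or.inl ⟨hx, z, hz, h, hXx⟩
    · exact Or.inr ⟨hx, z, hz, h, hXx⟩
  have hvol : volume Sp = volume S := by
    refine le_antisymm (measure_mono hsub1) ?_
    calc volume S ≤ volume (Sp ∪ Sm) := measure_mono hsub2
      _ ≤ volume Sp + volume Sm := measure_union_le _ _
      _ = volume Sp := by rw [hm0, add_zero]
  rw [ordFn, dplus_eq r s hpq, dminus_eq r s hpq, dplus', dminus']
  show (volume Sp).toReal - (volume Sm).toReal = _
  rw [hm0, hvol]
  show (volume S).toReal - 0 = _
  rw [sub_zero]
  exact volume_S_lemma r s hpq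

lemma ord_eq_neg_msf (r s : Pt) (hpq : p ≠ q)
    (Hsub : {z | z ∈ segment ℝ r s ∧ fY p q z = 0 ∧ fX p q z ∈ Ioo 0 (dist p q)}.Subsingleton)
    (hpos : ¬ ∃ z ∈ segment ℝ r s, fX p q z ∈ Ioo 0 (dist p q) ∧ 0 < fY p q z) :
    ordFn p q r s = -msf (fX p q r) (fX p q s) (dist p q) := by
  set Sp := {x : ℝ | x ∈ Icc 0 (dist p q) ∧ ∃ z ∈ segment ℝ r s, 0 ≤ fY p q z ∧ fX p q z = x}
  set Sm := {x : ℝ | x ∈ Icc 0 (dist p q) ∧ ∃ z ∈ segment ℝ r s, fY p q z ≤ 0 ∧ fX p q z = x}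
  set S := {x : ℝ | x ∈ Icc 0 (dist p q) ∧ ∃ z ∈ segment ℝ r s, fX p q z = x}
  have hm0 : volume Sp = 0 := measure_null_of_sub' r s hpq Hsub hpos
  have hsub1 : Sm ⊆ S := by rintro x ⟨hx, z, hz, _, hXx⟩; exact ⟨hx, z, hz, hXx⟩
  have hsub2 : S ⊆ Sp ∪ Sm := by
    rintro x ⟨hx, z, hz, hXx⟩
    rcases le_total 0 (fY p q z) with h | h
    · exact Or.inl ⟨hx, z, hz, h, hXx⟩
    · exact Or.inr ⟨hx, z, hz, h, hXx⟩
  have hvol : volume Sm = volume S := by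
    refine le_antisymm (measure_mono hsub1) ?_
    calc volume S ≤ volume (Sp ∪ Sm) := measure_mono hsub2
      _ ≤ volume Sp + volume Sm := measure_union_le _ _
      _ = volume Sm := by rw [hm0, zero_add]
  rw [ordFn, dplus_eq r s hpq, dminus_eq r s hpq, dplus', dminus']
  show (volume Sp).toReal - (volume Sm).toReal = _
  rw [hm0, hvol]
  show 0 - (volume S).toReal = _
  rw [zero_sub]
  rw [volume_S_lemma r s hpq]

def lmp (p q : Pt) : ℝ →ᵃ[ℝ] Pt := AffineMap.lineMap p (p + fr p q)

lemma lmp_apply (x : ℝ) : lmp p q x = p + x • fr p q := by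
  simp [lmp, AffineMap.lineMap_apply]; module

lemma lmp_inj (hpq : p ≠ q) : Function.Injective (lmp p q) := by
  intro x x' h
  rw [lmp_apply, lmp_apply] at h
  have h2 : x • fr p q = x' • fr p q := by
    have := congrArg (fun z => z - p) h
    simpa [add_sub_cancel_left] using this
  have hfr : fr p q ≠ 0 := by
    intro h0
    have := norm_fr hpq
    rw [h0, norm_zero] at this
    norm_num at this
  by_contra hne
  exact hfr (by
    have := sub_eq_zero.mpr h2
    rw [← sub_smul] at this
    rcases smul_eq_zero.mp this with h | h
    · exact absurd (sub_eq_zero.mp h) hne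
    · exact h)

lemma fX_lmp (hpq : p ≠ q) (x : ℝ) : fX p q (lmp p q x) = x := by
  rw [lmp_apply]
  have := fX_point hpq x 0
  simpa using this

lemma fY_lmp (hpq : p ≠ q) (x : ℝ) : fY p q (lmp p q x) = 0 := by
  rw [lmp_apply]
  have := fY_point hpq x 0
  simpa using this

lemma lmp_of_mem (hpq : p ≠ q) {z : Pt} (hY : fY p q z = 0) : lmp p q (fX p q z) = z := by
  rw [lmp_apply]
  have := span_eq hpq z
  rw [hY, zero_smul, add_zero] at this
  exact this

lemma seg_pq_image (hpq : p ≠ q) :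
    segment ℝ p q = lmp p q '' Icc 0 (dist p q) := by
  have h0 : lmp p q 0 = p := by rw [lmp_apply, zero_smul, add_zero]
  have hl : lmp p q (dist p q) = q := by rw [lmp_apply, ← q_eq hpq]
  calc segment ℝ p q = segment ℝ (lmp p q 0) (lmp p q (dist p q)) := by rw [h0, hl]
    _ = lmp p q '' segment ℝ 0 (dist p q) := (image_segment ℝ _ _ _).symm
    _ = lmp p q '' Icc 0 (dist p q) := by rw [segment_eq_Icc dist_nonneg]

lemma seg_rs_image (hpq : p ≠ q) {r s : Pt} (hYr : fY p q r = 0) (hYs : fY p q s = 0) :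
    segment ℝ r s = lmp p q '' uIcc (fX p q r) (fX p q s) := by
  calc segment ℝ r s = segment ℝ (lmp p q (fX p q r)) (lmp p q (fX p q s)) := by
        rw [lmp_of_mem hpq hYr, lmp_of_mem hpq hYs]
    _ = lmp p q '' segment ℝ (fX p q r) (fX p q s) := (image_segment ℝ _ _ _).symm
    _ = lmp p q '' uIcc (fX p q r) (fX p q s) := by rw [segment_eq_uIcc]

lemma inter_collinear (hpq : p ≠ q) {r s : Pt} (hYr : fY p q r = 0) (hYs : fY p q s = 0) :
    segment ℝ p q ∩ segment ℝ r s
      = lmp p q '' Icc (max 0 (min (fX p q r) (fX p q s)))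
          (min (dist p q) (max (fX p q r) (fX p q s))) := by
  rw [seg_pq_image hpq, seg_rs_image hpq hYr hYs,
    (Set.image_inter (lmp_inj hpq)).symm]
  congr 1
  rw [show uIcc (fX p q r) (fX p q s)
      = Icc (min (fX p q r) (fX p q s)) (max (fX p q r) (fX p q s)) from rfl,
    Set.Icc_inter_Icc]

lemma dist_lmp (hpq : p ≠ q) (x x' : ℝ) : dist (lmp p q x) (lmp p q x') = |x - x'| := by
  rw [lmp_apply, lmp_apply, dist_eq_norm]
  have : p + x • fr p q - (p + x' • fr p q) = (x - x') • fr p q := by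
    rw [sub_smul]; abel
  rw [this, norm_smul, norm_fr hpq, mul_one, Real.norm_eq_abs]

lemma uIcc_eq_Icc_endpoints {x1 x2 c d : ℝ} (hcd : c ≤ d) (h : uIcc x1 x2 = Icc c d) :
    max x1 x2 - min x1 x2 = d - c := by
  have h1 : min x1 x2 ∈ Icc c d := by
    rw [← h]; exact ⟨le_refl _, min_le_max⟩
  have h2 : max x1 x2 ∈ Icc c d := by
    rw [← h]; exact ⟨min_le_max, le_refl _⟩
  have h3 : c ∈ uIcc x1 x2 := by rw [h]; exact ⟨le_refl _, hcd⟩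
  have h4 : d ∈ uIcc x1 x2 := by rw [h]; exact ⟨hcd, le_refl _⟩
  have e1 : min x1 x2 = c := le_antisymm h3.1 h1.1
  have e2 : max x1 x2 = d := le_antisymm h2.2 h4.2
  rw [e1, e2]

lemma overlap_of_two_points (hpq : p ≠ q) {r s z₁ z₂ : Pt}
    (h₁p : z₁ ∈ segment ℝ p q) (h₁r : z₁ ∈ segment ℝ r s)
    (h₂p : z₂ ∈ segment ℝ p q) (h₂r : z₂ ∈ segment ℝ r s) (hne : z₁ ≠ z₂) :
    ∃ l₀ : ℝ, 0 < l₀ ∧ OverlapLen (segment ℝ p q) (segment ℝ r s) l₀ := by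
  obtain ⟨hY₁, hX₁⟩ := (mem_seg_frame_iff hpq).mp h₁p
  obtain ⟨hY₂, hX₂⟩ := (mem_seg_frame_iff hpq).mp h₂p
  obtain ⟨hYr, hYs⟩ := two_roots h₁r h₂r hne hY₁ hY₂
  set c := max 0 (min (fX p q r) (fX p q s)) with hc
  set d := min (dist p q) (max (fX p q r) (fX p q s)) with hd
  have hinter := inter_collinear hpq hYr hYs
  have hz₁ : z₁ ∈ lmp p q '' Icc c d := by rw [← hinter]; exact ⟨h₁p, h₁r⟩
  have hz₂ : z₂ ∈ lmp p q '' Icc c d := by rw [← hinter]; exact ⟨h₂p, h₂r⟩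
  obtain ⟨x₁, hx₁, hfx₁⟩ := hz₁
  obtain ⟨x₂, hx₂, hfx₂⟩ := hz₂
  have hcd : c ≤ d := le_trans hx₁.1 hx₁.2
  have hIccSeg : lmp p q '' Icc c d = segment ℝ (lmp p q c) (lmp p q d) := by
    rw [← segment_eq_Icc hcd, image_segment]
  refine ⟨dist (lmp p q c) (lmp p q d), ?_, lmp p q c, lmp p q d, by rw [hinter, hIccSeg], rfl⟩
  rw [dist_lmp hpq]
  have hx12 : x₁ ≠ x₂ := fun h => hne (by rw [← hfx₁, ← hfx₂, h])
  have : |x₁ - x₂| > 0 := abs_pos.mpr (sub_ne_zero.mpr hx12)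
  have hle : |x₁ - x₂| ≤ |c - d| := by
    rw [abs_sub_le_iff]
    rw [abs_sub_comm, abs_of_nonneg (by linarith : (0:ℝ) ≤ d - c)]
    constructor <;> [linarith [hx₁.1, hx₁.2, hx₂.1, hx₂.2]; linarith [hx₁.1, hx₁.2, hx₂.1, hx₂.2]]
  linarith

lemma subsingleton_of_no_overlap (hpq : p ≠ q) {r s : Pt}
    (hno : ¬ ∃ l₀ : ℝ, 0 < l₀ ∧ OverlapLen (segment ℝ p q) (segment ℝ r s) l₀) :
    {z | z ∈ segment ℝ r s ∧ fY p q z = 0 ∧ fX p q z ∈ Ioo 0 (dist p q)}.Subsingleton := by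
  intro z₁ hz₁ z₂ hz₂
  by_contra hne
  have h₁p : z₁ ∈ segment ℝ p q :=
    (mem_seg_frame_iff hpq).mpr ⟨hz₁.2.1, ⟨hz₁.2.2.1.le, hz₁.2.2.2.le⟩⟩
  have h₂p : z₂ ∈ segment ℝ p q :=
    (mem_seg_frame_iff hpq).mpr ⟨hz₂.2.1, ⟨hz₂.2.2.1.le, hz₂.2.2.2.le⟩⟩
  exact hno (overlap_of_two_points hpq h₁p hz₁.1 h₂p hz₂.1 hne)

lemma overlap_msf (hpq : p ≠ q) {r s : Pt} {l₀ : ℝ} (hl₀ : 0 < l₀)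
    (hov : OverlapLen (segment ℝ p q) (segment ℝ r s) l₀) :
    msf (fX p q r) (fX p q s) (dist p q) = l₀ := by
  obtain ⟨u, v, hinter, hdist⟩ := hov
  have huv : u ≠ v := by
    intro h
    rw [h, dist_self] at hdist
    linarith
  have hu : u ∈ segment ℝ p q ∩ segment ℝ r s := by
    rw [hinter]; exact left_mem_segment ℝ u v
  have hv : v ∈ segment ℝ p q ∩ segment ℝ r s := by
    rw [hinter]; exact right_mem_segment ℝ u v
  obtain ⟨hYu, hXu⟩ := (mem_seg_frame_iff hpq).mp hu.1
  obtain ⟨hYv, hXv⟩ := (mem_seg_frame_iff hpq).mp hv.1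
  obtain ⟨hYr, hYs⟩ := two_roots hu.2 hv.2 huv hYu hYv
  set c := max 0 (min (fX p q r) (fX p q s)) with hc
  set d := min (dist p q) (max (fX p q r) (fX p q s)) with hd
  have hinter2 := inter_collinear hpq hYr hYs
  -- segment u v = lmp '' Icc c d
  have hseg : segment ℝ u v = lmp p q '' Icc c d := by rw [← hinter, hinter2]
  -- u v as images
  have hu' : lmp p q (fX p q u) = u := lmp_of_mem hpq hYu
  have hv' : lmp p q (fX p q v) = v := lmp_of_mem hpq hYv
  have hseg2 : segment ℝ u v = lmp p q '' uIcc (fX p q u) (fX p q v) := by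
    calc segment ℝ u v = segment ℝ (lmp p q (fX p q u)) (lmp p q (fX p q v)) := by
          rw [hu', hv']
      _ = lmp p q '' segment ℝ (fX p q u) (fX p q v) := (image_segment ℝ _ _ _).symm
      _ = _ := by rw [segment_eq_uIcc]
  have hsets : uIcc (fX p q u) (fX p q v) = Icc c d := by
    have := hseg.symm.trans hseg2
    exact Set.image_injective.mpr (lmp_inj hpq) this.symm
  have hcd : c ≤ d := by
    by_contra hlt
    rw [Set.Icc_eq_empty (by linarith : ¬ c ≤ d)] at hsets
    have : fX p q u ∈ (∅ : Set ℝ) := by rw [← hsets]; exact ⟨min_le_left _ _, le_max_left _ _⟩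
    exact this
  have hdc := uIcc_eq_Icc_endpoints hcd hsets
  have habs : |fX p q u - fX p q v| = max (fX p q u) (fX p q v) - min (fX p q u) (fX p q v) := by
    rcases le_total (fX p q u) (fX p q v) with h | h
    · rw [abs_sub_comm, abs_of_nonneg (by linarith), max_eq_right h, min_eq_left h]
    · rw [abs_of_nonneg (by linarith), max_eq_left h, min_eq_right h]
  have hduv : dist u v = |fX p q u - fX p q v| := by
    rw [← hu', ← hv', dist_lmp hpq, fX_lmp hpq, fX_lmp hpq]
  rw [msf]
  rw [show min (dist p q) (max (fX p q r) (fX p q s)) = d from rfl,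
      show max 0 (min (fX p q r) (fX p q s)) = c from rfl]
  rw [← hdc, ← habs, ← hduv, hdist]
  exact max_eq_left hl₀.le

lemma dplus_bounds (p q r s : Pt) : 0 ≤ dplus p q r s ∧ dplus p q r s ≤ dist p q := by
  rw [dplus]
  split_ifs with h
  · exact ⟨le_refl 0, dist_nonneg⟩
  · constructor
    · exact ENNReal.toReal_nonneg
    · have key : ∀ T : Set ℝ, T ⊆ Icc 0 (dist p q) → (volume T).toReal ≤ dist p q := by
        intro T hT
        have h2 : (volume (Icc (0:ℝ) (dist p q))).toReal = dist p q := by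
          rw [Real.volume_Icc, sub_zero, ENNReal.toReal_ofReal dist_nonneg]
        rw [← h2]
        exact ENNReal.toReal_mono (by rw [Real.volume_Icc]; exact ENNReal.ofReal_ne_top)
          (measure_mono hT)
      exact key _ (fun x hx => hx.1)

lemma dminus_bounds (p q r s : Pt) : 0 ≤ dminus p q r s ∧ dminus p q r s ≤ dist p q := by
  rw [dminus]
  split_ifs with h
  · exact ⟨le_refl 0, dist_nonneg⟩
  · constructor
    · exact ENNReal.toReal_nonneg
    · have key : ∀ T : Set ℝ, T ⊆ Icc 0 (dist p q) → (volume T).toReal ≤ dist p q := by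
        intro T hT
        have h2 : (volume (Icc (0:ℝ) (dist p q))).toReal = dist p q := by
          rw [Real.volume_Icc, sub_zero, ENNReal.toReal_ofReal dist_nonneg]
        rw [← h2]
        exact ENNReal.toReal_mono (by rw [Real.volume_Icc]; exact ENNReal.ofReal_ne_top)
          (measure_mono hT)
      exact key _ (fun x hx => hx.1)

lemma abs_ordFn_le (p q r s : Pt) : |ordFn p q r s| ≤ dist p q := by
  have h1 := dplus_bounds p q r s
  have h2 := dminus_bounds p q r s
  rw [ordFn, abs_le]
  constructor <;> linarith [h1.1, h1.2, h2.1, h2.2]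

lemma Z_empty_of_endpoints (hpq : p ≠ q) {r s : Pt}
    (H : ∀ z, z ∈ segment ℝ p q → z ∈ segment ℝ r s → z = p ∨ z = q) :
    {z | z ∈ segment ℝ r s ∧ fY p q z = 0 ∧ fX p q z ∈ Ioo 0 (dist p q)} = ∅ := by
  ext z
  simp only [mem_setOf_eq, mem_empty_iff_false, iff_false, not_and]
  intro hz hY hX
  have hzp : z ∈ segment ℝ p q :=
    (mem_seg_frame_iff hpq).mpr ⟨hY, hX.1.le, hX.2.le⟩
  rcases H z hzp hz with h | h
  · rw [h] at hX; rw [fX_self] at hX; exact lt_irrefl 0 hX.1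
  · rw [h] at hX; rw [fX_q hpq] at hX; exact lt_irrefl _ hX.2

lemma not_both_of_endpoints (hpq : p ≠ q) {r s : Pt}
    (H : ∀ z, z ∈ segment ℝ p q → z ∈ segment ℝ r s → z = p ∨ z = q) :
    ¬ ((∃ z ∈ segment ℝ r s, fX p q z ∈ Ioo 0 (dist p q) ∧ 0 < fY p q z) ∧
       (∃ z ∈ segment ℝ r s, fX p q z ∈ Ioo 0 (dist p q) ∧ fY p q z < 0)) := by
  rintro ⟨⟨z₁, hz₁, hX₁, hY₁⟩, ⟨z₂, hz₂, hX₂, hY₂⟩⟩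
  obtain ⟨z₀, hz₀, hY₀, hX₀⟩ := ivt_zero hz₁ hz₂ hY₁ hY₂ hX₁ hX₂
  have := Z_empty_of_endpoints hpq H
  have hz₀' : z₀ ∈ {z | z ∈ segment ℝ r s ∧ fY p q z = 0 ∧ fX p q z ∈ Ioo 0 (dist p q)} :=
    ⟨hz₀, hY₀, hX₀⟩
  rw [this] at hz₀'
  exact hz₀'

section Tendsto
variable {pn qn rn sn zn : ℕ → Pt} {pl ql rl sl zl : Pt}

lemma tendsto_coord (h : Tendsto zn atTop (𝓝 zl)) (k : Fin 2) :
    Tendsto (fun n => zn n k) atTop (𝓝 (zl k)) := by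
  have h1 : Tendsto (fun n => (inner ℝ (EuclideanSpace.single k (1:ℝ)) (zn n) : ℝ)) atTop
      (𝓝 (inner ℝ (EuclideanSpace.single k (1:ℝ)) zl : ℝ)) :=
    Filter.Tendsto.inner tendsto_const_nhds h
  have e : ∀ x : Pt, (inner ℝ (EuclideanSpace.single k (1:ℝ)) x : ℝ) = x k := by
    intro x
    rw [EuclideanSpace.inner_single_left]
    simp
  rw [e zl] at h1
  exact h1.congr (fun n => e (zn n))

lemma tendsto_pt {an bn : ℕ → ℝ} {al bl : ℝ} (ha : Tendsto an atTop (𝓝 al))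
    (hb : Tendsto bn atTop (𝓝 bl)) :
    Tendsto (fun n => pt (an n) (bn n)) atTop (𝓝 (pt al bl)) := by
  have e : ∀ a b : ℝ, pt a b = a • pt 1 0 + b • pt 0 1 := by
    intro a b
    ext k
    fin_cases k
    · simp [pt]
    · simp [pt]
  rw [e al bl]
  exact ((ha.smul_const _).add (hb.smul_const _)).congr (fun n => (e _ _).symm)

lemma tendsto_fr (hp : Tendsto pn atTop (𝓝 pl)) (hq : Tendsto qn atTop (𝓝 ql))
    (hpq : pl ≠ ql) :
    Tendsto (fun n => fr (pn n) (qn n)) atTop (𝓝 (fr pl ql)) := by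
  have hsub : Tendsto (fun n => qn n - pn n) atTop (𝓝 (ql - pl)) := hq.sub hp
  have hnorm : Tendsto (fun n => ‖qn n - pn n‖) atTop (𝓝 ‖ql - pl‖) := hsub.norm
  have hne : ‖ql - pl‖ ≠ 0 := by
    simpa [sub_eq_zero] using fun h => hpq h.symm
  exact (hnorm.inv₀ hne).smul hsub

lemma tendsto_frw (hp : Tendsto pn atTop (𝓝 pl)) (hq : Tendsto qn atTop (𝓝 ql))
    (hpq : pl ≠ ql) :
    Tendsto (fun n => frw (pn n) (qn n)) atTop (𝓝 (frw pl ql)) := by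
  have hfr := tendsto_fr hp hq hpq
  exact tendsto_pt (tendsto_coord hfr 1).neg (tendsto_coord hfr 0)

lemma tendsto_fX (hp : Tendsto pn atTop (𝓝 pl)) (hq : Tendsto qn atTop (𝓝 ql))
    (hpq : pl ≠ ql) (hz : Tendsto zn atTop (𝓝 zl)) :
    Tendsto (fun n => fX (pn n) (qn n) (zn n)) atTop (𝓝 (fX pl ql zl)) :=
  (tendsto_fr hp hq hpq).inner (hz.sub hp)

lemma tendsto_fY (hp : Tendsto pn atTop (𝓝 pl)) (hq : Tendsto qn atTop (𝓝 ql))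
    (hpq : pl ≠ ql) (hz : Tendsto zn atTop (𝓝 zl)) :
    Tendsto (fun n => fY (pn n) (qn n) (zn n)) atTop (𝓝 (fY pl ql zl)) :=
  (tendsto_frw hp hq hpq).inner (hz.sub hp)

lemma tendsto_msf {an bn ln : ℕ → ℝ} {al bl ll : ℝ} (ha : Tendsto an atTop (𝓝 al))
    (hb : Tendsto bn atTop (𝓝 bl)) (hl : Tendsto ln atTop (𝓝 ll)) :
    Tendsto (fun n => msf (an n) (bn n) (ln n)) atTop (𝓝 (msf al bl ll)) :=
  ((hl.min (ha.max hb)).sub (tendsto_const_nhds.max (ha.min hb))).max tendsto_const_nhds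

lemma transfer_witness {σ : ℝ} (hp : Tendsto pn atTop (𝓝 pl)) (hq : Tendsto qn atTop (𝓝 ql))
    (hr : Tendsto rn atTop (𝓝 rl)) (hs : Tendsto sn atTop (𝓝 sl)) (hpq : pl ≠ ql)
    (hP : ∃ z ∈ segment ℝ rl sl, fX pl ql z ∈ Ioo 0 (dist pl ql) ∧ 0 < σ * fY pl ql z) :
    ∀ᶠ n in atTop, ∃ z ∈ segment ℝ (rn n) (sn n),
      fX (pn n) (qn n) z ∈ Ioo 0 (dist (pn n) (qn n)) ∧ 0 < σ * fY (pn n) (qn n) z := by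
  obtain ⟨z, ⟨α, β, hα, hβ, hαβ, hcomb⟩, hX, hY⟩ := hP
  set znn := fun n => α • rn n + β • sn n with hznn
  have hzn : Tendsto znn atTop (𝓝 z) := by
    rw [← hcomb]
    exact ((hr.const_smul α).add (hs.const_smul β))
  have hXn := tendsto_fX hp hq hpq hzn
  have hYn := tendsto_fY hp hq hpq hzn
  have hln : Tendsto (fun n => dist (pn n) (qn n)) atTop (𝓝 (dist pl ql)) := hp.dist hq
  have e1 : ∀ᶠ n in atTop, 0 < fX (pn n) (qn n) (znn n) := hXn.eventually_const_lt hX.1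
  have e2 : ∀ᶠ n in atTop, fX (pn n) (qn n) (znn n) < dist (pn n) (qn n) := by
    have := (hln.sub hXn).eventually_const_lt (by linarith [hX.2] : (0:ℝ) < dist pl ql - fX pl ql z)
    exact this.mono (fun n hn => by linarith)
  have e3 : ∀ᶠ n in atTop, 0 < σ * fY (pn n) (qn n) (znn n) :=
    (hYn.const_mul σ).eventually_const_lt hY
  filter_upwards [e1, e2, e3] with n h1 h2 h3
  exact ⟨znn n, ⟨α, β, hα, hβ, hαβ, rfl⟩, ⟨h1, h2⟩, h3⟩

end Tendsto

end AuxFrame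

lemma main_core (pn qn rn sn : ℕ → Pt) (pl ql rl sl : Pt) (A : ℝ)
    (hpn : Tendsto pn atTop (𝓝 pl)) (hqn : Tendsto qn atTop (𝓝 ql))
    (hrn : Tendsto rn atTop (𝓝 rl)) (hsn : Tendsto sn atTop (𝓝 sl))
    (hOrd : Tendsto (fun n => ordFn (pn n) (qn n) (rn n) (sn n)) atTop (𝓝 A))
    (hend : ∀ n, ∀ z, z ∈ segment ℝ (pn n) (qn n) → z ∈ segment ℝ (rn n) (sn n)
      → z = pn n ∨ z = qn n) :
    (∀ l₀ : ℝ, 0 < l₀ → OverlapLen (segment ℝ pl ql) (segment ℝ rl sl) l₀ →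
      A = l₀ ∨ A = -l₀) ∧
    ((¬ ∃ l₀ : ℝ, 0 < l₀ ∧ OverlapLen (segment ℝ pl ql) (segment ℝ rl sl) l₀) →
      A = ordFn pl ql rl sl) := by
  have hld : Tendsto (fun n => dist (pn n) (qn n)) atTop (𝓝 (dist pl ql)) := hpn.dist hqn
  by_cases hdeg : pl = ql
  · -- degenerate limit bar i
    have hld0 : Tendsto (fun n => dist (pn n) (qn n)) atTop (𝓝 0) := by
      rw [hdeg] at hld; simpa using hld
    have hA0 : A = 0 := by
      refine tendsto_nhds_unique hOrd ?_
      refine tendsto_of_tendsto_of_tendsto_of_le_of_le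
        (g := fun n => -dist (pn n) (qn n)) (h := fun n => dist (pn n) (qn n))
        (by simpa using hld0.neg) hld0 ?_ ?_
      · intro n
        dsimp only
        linarith [abs_le.mp (abs_ordFn_le (pn n) (qn n) (rn n) (sn n))]
      · intro n
        dsimp only
        linarith [abs_le.mp (abs_ordFn_le (pn n) (qn n) (rn n) (sn n))]
    constructor
    · intro l hl hov
      exfalso
      obtain ⟨u, v, hinter, hd⟩ := hov
      have hu : u ∈ segment ℝ pl ql ∩ segment ℝ rl sl := by
        rw [hinter]; exact left_mem_segment ℝ u v
      have hv : v ∈ segment ℝ pl ql ∩ segment ℝ rl sl := by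
        rw [hinter]; exact right_mem_segment ℝ u v
      have hsegi : segment ℝ pl ql = {pl} := by rw [← hdeg, segment_same]
      rw [hsegi] at hu hv
      rw [hu.1, hv.1, dist_self] at hd
      linarith
    · intro _
      have : ordFn pl ql rl sl = 0 := by
        rw [ordFn, dplus, dminus, if_pos hdeg, if_pos hdeg, sub_zero]
      rw [hA0, this]
  · -- nondegenerate limit bar i
    have hl0 : 0 < dist pl ql := dist_pos.mpr hdeg
    have hevne : ∀ᶠ n in atTop, pn n ≠ qn n := by
      have := hld.eventually_const_lt hl0
      exact this.mono (fun n hn => dist_pos.mp hn)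
    have han : Tendsto (fun n => fX (pn n) (qn n) (rn n)) atTop (𝓝 (fX pl ql rl)) :=
      tendsto_fX hpn hqn hdeg hrn
    have hbn : Tendsto (fun n => fX (pn n) (qn n) (sn n)) atTop (𝓝 (fX pl ql sl)) :=
      tendsto_fX hpn hqn hdeg hsn
    have hmsf : Tendsto (fun n => msf (fX (pn n) (qn n) (rn n)) (fX (pn n) (qn n) (sn n))
        (dist (pn n) (qn n))) atTop (𝓝 (msf (fX pl ql rl) (fX pl ql sl) (dist pl ql))) :=
      tendsto_msf han hbn hld
    have hdich : ∀ᶠ n in atTop,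
        ordFn (pn n) (qn n) (rn n) (sn n)
          = msf (fX (pn n) (qn n) (rn n)) (fX (pn n) (qn n) (sn n)) (dist (pn n) (qn n)) ∨
        ordFn (pn n) (qn n) (rn n) (sn n)
          = -msf (fX (pn n) (qn n) (rn n)) (fX (pn n) (qn n) (sn n)) (dist (pn n) (qn n)) := by
      filter_upwards [hevne] with n hne
      have hZ := Z_empty_of_endpoints hne (hend n)
      have hsub : {z | z ∈ segment ℝ (rn n) (sn n) ∧ fY (pn n) (qn n) z = 0
          ∧ fX (pn n) (qn n) z ∈ Ioo 0 (dist (pn n) (qn n))}.Subsingleton := by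
        rw [hZ]; exact subsingleton_empty
      rcases not_and_or.mp (not_both_of_endpoints hne (hend n)) with h | h
      · exact Or.inr (ord_eq_neg_msf _ _ hne hsub h)
      · exact Or.inl (ord_eq_msf _ _ hne hsub h)
    have hsq : A * A
        = msf (fX pl ql rl) (fX pl ql sl) (dist pl ql)
          * msf (fX pl ql rl) (fX pl ql sl) (dist pl ql) := by
      refine tendsto_nhds_unique (hOrd.mul hOrd) ((hmsf.mul hmsf).congr' ?_)
      filter_upwards [hdich] with n hn
      rcases hn with h | h <;> rw [h] <;> ring
    constructor
    · -- part 1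
      intro l₀ hl₀ hov
      have hmsfeq : msf (fX pl ql rl) (fX pl ql sl) (dist pl ql) = l₀ :=
        overlap_msf hdeg hl₀ hov
      rw [hmsfeq] at hsq
      have : (A - l₀) * (A + l₀) = 0 := by ring_nf; linarith [hsq]
      rcases mul_eq_zero.mp this with h | h
      · left; linarith
      · right; linarith
    · -- part 2
      intro hno
      have hZsub := subsingleton_of_no_overlap hdeg hno
      by_cases hPp : ∃ z ∈ segment ℝ rl sl,
          fX pl ql z ∈ Ioo 0 (dist pl ql) ∧ 0 < fY pl ql z
      · by_cases hPm : ∃ z ∈ segment ℝ rl sl,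
            fX pl ql z ∈ Ioo 0 (dist pl ql) ∧ fY pl ql z < 0
        · exfalso
          have t1 := transfer_witness (σ := 1) hpn hqn hrn hsn hdeg
            (by
              obtain ⟨z, hz, hX, hY⟩ := hPp
              exact ⟨z, hz, hX, by linarith⟩)
          have t2 := transfer_witness (σ := -1) hpn hqn hrn hsn hdeg
            (by
              obtain ⟨z, hz, hX, hY⟩ := hPm
              exact ⟨z, hz, hX, by linarith⟩)
          obtain ⟨n, hne, ht1, ht2⟩ := (hevne.and (t1.and t2)).exists
          refine not_both_of_endpoints hne (hend n) ⟨?_, ?_⟩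
          · obtain ⟨z, hz, hX, hY⟩ := ht1
            exact ⟨z, hz, hX, by linarith⟩
          · obtain ⟨z, hz, hX, hY⟩ := ht2
            exact ⟨z, hz, hX, by linarith⟩
        · -- A = msf
          have hord : ordFn pl ql rl sl
              = msf (fX pl ql rl) (fX pl ql sl) (dist pl ql) :=
            ord_eq_msf _ _ hdeg hZsub hPm
          rw [hord]
          refine tendsto_nhds_unique hOrd (hmsf.congr' ?_)
          have t1 := transfer_witness (σ := 1) hpn hqn hrn hsn hdeg
            (by
              obtain ⟨z, hz, hX, hY⟩ := hPp
              exact ⟨z, hz, hX, by linarith⟩)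
          filter_upwards [hevne, t1] with n hne ht1
          have hZ := Z_empty_of_endpoints hne (hend n)
          have hsub : {z | z ∈ segment ℝ (rn n) (sn n) ∧ fY (pn n) (qn n) z = 0
              ∧ fX (pn n) (qn n) z ∈ Ioo 0 (dist (pn n) (qn n))}.Subsingleton := by
            rw [hZ]; exact subsingleton_empty
          have hP1 : ∃ z ∈ segment ℝ (rn n) (sn n),
              fX (pn n) (qn n) z ∈ Ioo 0 (dist (pn n) (qn n)) ∧ 0 < fY (pn n) (qn n) z := by
            obtain ⟨z, hz, hX, hY⟩ := ht1
            exact ⟨z, hz, hX, by linarith⟩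
          have hnm : ¬ ∃ z ∈ segment ℝ (rn n) (sn n),
              fX (pn n) (qn n) z ∈ Ioo 0 (dist (pn n) (qn n)) ∧ fY (pn n) (qn n) z < 0 := by
            rcases not_and_or.mp (not_both_of_endpoints hne (hend n)) with h | h
            · exact absurd hP1 h
            · exact h
          exact (ord_eq_msf _ _ hne hsub hnm).symm
      · by_cases hPm : ∃ z ∈ segment ℝ rl sl,
            fX pl ql z ∈ Ioo 0 (dist pl ql) ∧ fY pl ql z < 0
        · -- A = -msf
          have hord : ordFn pl ql rl sl
              = -msf (fX pl ql rl) (fX pl ql sl) (dist pl ql) :=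
            ord_eq_neg_msf _ _ hdeg hZsub hPp
          rw [hord]
          refine tendsto_nhds_unique hOrd ((hmsf.neg).congr' ?_)
          have t2 := transfer_witness (σ := -1) hpn hqn hrn hsn hdeg
            (by
              obtain ⟨z, hz, hX, hY⟩ := hPm
              exact ⟨z, hz, hX, by linarith⟩)
          filter_upwards [hevne, t2] with n hne ht2
          have hZ := Z_empty_of_endpoints hne (hend n)
          have hsub : {z | z ∈ segment ℝ (rn n) (sn n) ∧ fY (pn n) (qn n) z = 0
              ∧ fX (pn n) (qn n) z ∈ Ioo 0 (dist (pn n) (qn n))}.Subsingleton := by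
            rw [hZ]; exact subsingleton_empty
          have hP2 : ∃ z ∈ segment ℝ (rn n) (sn n),
              fX (pn n) (qn n) z ∈ Ioo 0 (dist (pn n) (qn n)) ∧ fY (pn n) (qn n) z < 0 := by
            obtain ⟨z, hz, hX, hY⟩ := ht2
            exact ⟨z, hz, hX, by linarith⟩
          have hnp : ¬ ∃ z ∈ segment ℝ (rn n) (sn n),
              fX (pn n) (qn n) z ∈ Ioo 0 (dist (pn n) (qn n)) ∧ 0 < fY (pn n) (qn n) z := by
            rcases not_and_or.mp (not_both_of_endpoints hne (hend n)) with h | h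
            · exact h
            · exact absurd hP2 h
          exact (ord_eq_neg_msf _ _ hne hsub hnp).symm
        · -- both fail
          have e1 : ordFn pl ql rl sl
              = msf (fX pl ql rl) (fX pl ql sl) (dist pl ql) :=
            ord_eq_msf _ _ hdeg hZsub hPm
          have e2 : ordFn pl ql rl sl
              = -msf (fX pl ql rl) (fX pl ql sl) (dist pl ql) :=
            ord_eq_neg_msf _ _ hdeg hZsub hPp
          have hmsf0 : msf (fX pl ql rl) (fX pl ql sl) (dist pl ql) = 0 := by linarith
          rw [hmsf0] at hsq
          have hA0 : A = 0 := by nlinarith [hsq]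
          rw [hA0, e1, hmsf0]


/-- For any linkage `L` and any `(C,A) ∈ IGConf₀(L)`, the annotation `A`
is well-annotated: for distinct edges `eᵢ` and `eⱼ`, if the segments `C(eᵢ)` and `C(eⱼ)`
overlap over a segment of length `l > 0` then `A i j = l` or `A i j = −l`, and if they do
not overlap over a segment of positive length then `A i j = Ord(C(eᵢ), C(eⱼ))`. -/
theorem igconf_well_annotated [Fintype V] [Fintype E] (L : Linkage V E)
    (p : (V → Pt) × (E → E → ℝ)) (hp : p ∈ IGConf L) (i j : E) (hij : i ≠ j) :
    (∀ l : ℝ, 0 < l → OverlapLen (Seg L p.1 i) (Seg L p.1 j) l →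
      p.2 i j = l ∨ p.2 i j = -l) ∧
    ((¬ ∃ l : ℝ, 0 < l ∧ OverlapLen (Seg L p.1 i) (Seg L p.1 j) l) →
      p.2 i j = ordFn (p.1 (L.fst i)) (p.1 (L.snd i)) (p.1 (L.fst j)) (p.1 (L.snd j))) := by
  obtain ⟨-, hcl⟩ := hp
  obtain ⟨w, hw, hwlim⟩ := mem_closure_iff_seq_limit.mp hcl
  choose C hC hCeq using hw
  have hw1 : ∀ n, (w n).1 = C n := fun n => by rw [← hCeq n]; rfl
  have hw2 : ∀ n, (w n).2 i j
      = ordFn (C n (L.fst i)) (C n (L.snd i)) (C n (L.fst j)) (C n (L.snd j)) :=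
    fun n => by rw [← hCeq n]; rfl
  have h1 : Tendsto (fun n => (w n).1) atTop (𝓝 p.1) := (continuous_fst.tendsto p).comp hwlim
  have h2 : Tendsto (fun n => (w n).2 i j) atTop (𝓝 (p.2 i j)) := by
    have hsnd : Tendsto (fun n => (w n).2) atTop (𝓝 p.2) := (continuous_snd.tendsto p).comp hwlim
    have hi : Tendsto (fun n => (w n).2 i) atTop (𝓝 (p.2 i)) :=
      ((continuous_apply i).tendsto p.2).comp hsnd
    exact ((continuous_apply j).tendsto (p.2 i)).comp hi
  have hpt : ∀ v : V, Tendsto (fun n => C n v) atTop (𝓝 (p.1 v)) := by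
    intro v
    have := ((continuous_apply v).tendsto p.1).comp h1
    exact this.congr (fun n => by rw [Function.comp_apply, hw1 n])
  have hOrd : Tendsto (fun n => ordFn (C n (L.fst i)) (C n (L.snd i)) (C n (L.fst j))
      (C n (L.snd j))) atTop (𝓝 (p.2 i j)) := h2.congr (fun n => hw2 n)
  have hend : ∀ n, ∀ z, z ∈ segment ℝ (C n (L.fst i)) (C n (L.snd i))
      → z ∈ segment ℝ (C n (L.fst j)) (C n (L.snd j))
      → z = C n (L.fst i) ∨ z = C n (L.snd i) := by
    intro n z hz1 hz2
    obtain ⟨⟨u₀, hu₀, hu₀z⟩, -⟩ := (hC n).2.2 i j hij z ⟨hz1, hz2⟩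
    rcases hu₀ with h | h
    · left; rw [← hu₀z, ← h]
    · right; rw [← hu₀z, ← h]
  exact main_core _ _ _ _ _ _ _ _ _ (hpt _) (hpt _) (hpt _) (hpt _) hOrd hend
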